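/- In type A_5 with simple roots α_1,…,α_5, taking S = Π and T = Π∖{α_3}, the element h = h_{α_1} − h_{α_2} + h_{α_4} − h_{α_5} is nonzero, lies in the span of {h_α : α ∈ S ∩ T}, and satisfies ε_E(h) = 0 for every E ∈ K(S) ∪ K(T). -/

import Mathlib

/-!
Framework: abstract root-system data with a pairing `pair α β = α(h_β)`
(via the Killing form), Dynkin-diagram connectivity, highest roots, and
Kostant's cascade construction `K(S)` as an inductive membership predicate.
-/

namespace CascadePaper

/-- Abstract root-system data: the set of roots `R`, the simple roots,
and the Killing-form pairing `pair α β = α(h_β)`. -/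
structure Setup (k V : Type*) [Field k] [AddCommGroup V] [Module k V] where
  R : Set V
  simple : Set V
  pair : V →ₗ[k] V →ₗ[k] k

variable {k V : Type*} [Field k] [AddCommGroup V] [Module k V]

/-- Adjacency in the Dynkin diagram: distinct roots with nonzero pairing. -/
def Setup.adj (D : Setup k V) (α β : V) : Prop := α ≠ β ∧ D.pair α β ≠ 0

/-- A set of simple roots is connected (in the Dynkin diagram). -/
def Setup.ConnectedIn (D : Setup k V) (S : Set V) : Prop :=
  ∀ α ∈ S, ∀ β ∈ S, Relation.ReflTransGen (fun x y => x ∈ S ∧ y ∈ S ∧ D.adj x y) α β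

/-- `C` is a connected component of `S` (for the Dynkin diagram). -/
def Setup.IsConnComp (D : Setup k V) (S C : Set V) : Prop :=
  C ⊆ S ∧ C.Nonempty ∧ D.ConnectedIn C ∧
    ∀ C' : Set V, C ⊆ C' → C' ⊆ S → D.ConnectedIn C' → C' ⊆ C

/-- `ε` is the highest root of the root subsystem generated by `S`:
it is a root, a nonnegative integral combination of elements of `S`, and it
dominates every root of the subsystem. -/
def Setup.IsHighestRoot (D : Setup k V) (S : Set V) (ε : V) : Prop :=
  ε ∈ D.R ∧ ε ∈ AddSubmonoid.closure S ∧
    ∀ β ∈ D.R, β ∈ AddSubmonoid.closure S → ε - β ∈ AddSubmonoid.closure S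

/-- Kostant's cascade: `InCascade S K` means `K ∈ 𝒦(S)`.  For connected
nonempty `S`, `S ∈ 𝒦(S)` and `𝒦(S) ⊇ 𝒦({α ∈ S | ε_S(h_α) = 0})`; in
general `𝒦(S)` is the union of the cascades of the connected components. -/
inductive Setup.InCascade (D : Setup k V) : Set V → Set V → Prop
  | self (S : Set V) (hne : S.Nonempty) (hconn : D.ConnectedIn S) :
      Setup.InCascade D S S
  | step (S K : Set V) (ε : V) (hconn : D.ConnectedIn S) (hε : D.IsHighestRoot S ε)
      (h : Setup.InCascade D {α ∈ S | D.pair ε α = 0} K) : Setup.InCascade D S K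
  | comp (S C K : Set V) (hC : D.IsConnComp S C) (h : Setup.InCascade D C K) :
      Setup.InCascade D S K

/-- Two roots are strongly orthogonal if neither their sum nor their
difference is a root. -/
def Setup.StronglyOrthogonal (D : Setup k V) (α β : V) : Prop :=
  α + β ∉ D.R ∧ α - β ∉ D.R

/-- The set of highest roots `ε_K`, `K ∈ 𝒦(S)`, of the cascade of `S`. -/
def Setup.cascadeRoots (D : Setup k V) (S : Set V) : Set V :=
  {ε | ∃ K, D.InCascade S K ∧ D.IsHighestRoot K ε}

end CascadePaper

namespace CascadePaper

/-! Concrete model of the root system of type `A_ℓ` inside `ℚ^{ℓ+1}`: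
roots `e_i - e_j` (`i ≠ j`), simple roots `β_i = e_i - e_{i+1}`, and the
standard scalar product as the (normalized Killing) pairing. -/

/-- The standard scalar product on `Fin n → ℚ`, as a bilinear map. -/
noncomputable def dotQ {n : ℕ} : (Fin n → ℚ) →ₗ[ℚ] (Fin n → ℚ) →ₗ[ℚ] ℚ :=
  LinearMap.mk₂ ℚ (fun x y => ∑ i, x i * y i)
    (fun x x' y => by simp [add_mul, Finset.sum_add_distrib])
    (fun c x y => by simp [Finset.mul_sum, mul_assoc])
    (fun x y y' => by simp [mul_add, Finset.sum_add_distrib])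
    (fun c x y => by simp [Finset.mul_sum]; apply Finset.sum_congr rfl; intros; ring)

/-- The standard basis vector `e_i` of `ℚ^{ℓ+1}`. -/
noncomputable def eVec {n : ℕ} (i : Fin n) : Fin n → ℚ := Pi.single i 1

/-- The roots of type `A_ℓ` : `e_i - e_j`, `i ≠ j`. -/
def Aroots (ℓ : ℕ) : Set (Fin (ℓ + 1) → ℚ) :=
  {v | ∃ i j : Fin (ℓ + 1), i ≠ j ∧ v = eVec i - eVec j}

/-- The simple root `β_i = e_i - e_{i+1}` of type `A_ℓ` (0-indexed). -/
noncomputable def betaA (ℓ : ℕ) (i : Fin ℓ) : Fin (ℓ + 1) → ℚ :=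
  eVec i.castSucc - eVec i.succ

/-- The root-system data of type `A_ℓ`. -/
noncomputable def Asetup (ℓ : ℕ) : Setup ℚ (Fin (ℓ + 1) → ℚ) :=
  { R := Aroots ℓ
    simple := Set.range (betaA ℓ)
    pair := dotQ }

/-- The cascade root `ε_i = β_i + β_{i+1} + ⋯ + β_{ℓ+1-i}` of type `A_ℓ`
(here `i` is 0-indexed: `epsA ℓ i = β_{i+1} + ⋯ + β_{ℓ-i}` in the 1-indexed
notation of the paper). -/
noncomputable def epsA (ℓ : ℕ) (i : ℕ) : Fin (ℓ + 1) → ℚ :=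
  ∑ j ∈ Finset.univ.filter (fun j : Fin ℓ => i ≤ (j : ℕ) ∧ (j : ℕ) + i + 1 ≤ ℓ),
    betaA ℓ j

end CascadePaper

namespace CascadePaper

section Aux

lemma dot_single {n : ℕ} (a : Fin n) (v : Fin n → ℚ) : dotQ (eVec a) v = v a := by
  simp [dotQ, eVec, Pi.single_apply, ite_mul, Finset.sum_ite_eq']

lemma dot_e_sub {n : ℕ} (a b : Fin n) (v : Fin n → ℚ) :
    dotQ (eVec a - eVec b) v = v a - v b := by
  simp [map_sub, LinearMap.sub_apply, dot_single]

lemma dot_beta (i : Fin 5) (v : Fin 6 → ℚ) :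
    dotQ (betaA 5 i) v = v i.castSucc - v i.succ := by
  rw [betaA, dot_e_sub]

lemma beta_apply (i : Fin 5) (c : Fin 6) :
    betaA 5 i c = (if (c:ℕ) = (i:ℕ) then 1 else 0) - (if (c:ℕ) = (i:ℕ)+1 then 1 else 0) := by
  simp [betaA, eVec, Pi.single_apply, Fin.ext_iff]

lemma eVec_apply {n : ℕ} (i c : Fin n) : eVec i c = if (c:ℕ) = (i:ℕ) then 1 else 0 := by
  simp [eVec, Pi.single_apply, Fin.ext_iff]

lemma beta_ne (i j : Fin 5) (hij : i ≠ j) : betaA 5 i ≠ betaA 5 j := by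
  intro hEq
  have := congrFun hEq i.castSucc
  rw [beta_apply, beta_apply] at this
  fin_cases i <;> fin_cases j <;> (try norm_num at this) <;> norm_num at hij

lemma dot_comm {n : ℕ} (x y : Fin n → ℚ) : dotQ x y = dotQ y x := by
  simp [dotQ] <;> exact Finset.sum_congr rfl fun i _ => mul_comm _ _

lemma closure_nonneg {n : ℕ} {K : Set (Fin n → ℚ)} {a : Fin n} (hK : ∀ v ∈ K, 0 ≤ v a) :
    ∀ x ∈ AddSubmonoid.closure K, 0 ≤ x a := by
  intro x hx
  induction hx using AddSubmonoid.closure_induction with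
  | mem v hv => exact hK v hv
  | zero => simp
  | add x y _ _ hx hy => simpa using add_nonneg hx hy

lemma closure_nonpos {n : ℕ} {K : Set (Fin n → ℚ)} {a : Fin n} (hK : ∀ v ∈ K, v a ≤ 0) :
    ∀ x ∈ AddSubmonoid.closure K, x a ≤ 0 := by
  intro x hx
  induction hx using AddSubmonoid.closure_induction with
  | mem v hv => exact hK v hv
  | zero => simp
  | add x y _ _ hx hy => simpa using add_nonpos hx hy

/-- The six sets that can occur in the two cascades. -/
def SP : Set (Fin 6 → ℚ) := Set.range (betaA 5)
def TP : Set (Fin 6 → ℚ) := SP \ {betaA 5 2}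
def MP : Set (Fin 6 → ℚ) := {betaA 5 1, betaA 5 2, betaA 5 3}
def BP : Set (Fin 6 → ℚ) := {betaA 5 2}
def P01 : Set (Fin 6 → ℚ) := {betaA 5 0, betaA 5 1}
def P34 : Set (Fin 6 → ℚ) := {betaA 5 3, betaA 5 4}

lemma hr_unique {K : Set (Fin 6 → ℚ)} {a b : Fin 6} (hab : (a:ℕ) ≠ (b:ℕ))
    (hcl : eVec a - eVec b ∈ AddSubmonoid.closure K)
    (hpos : ∀ v ∈ K, 0 ≤ v a) (hneg : ∀ v ∈ K, v b ≤ 0)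
    {ε : Fin 6 → ℚ} (hε : (Asetup 5).IsHighestRoot K ε) : ε = eVec a - eVec b := by
  obtain ⟨hR, hclε, hdom⟩ := hε
  obtain ⟨i, j, hij, rfl⟩ := hR
  have hsub := hdom _ ⟨a, b, fun hc => hab (by rw [hc]), rfl⟩ hcl
  have ha := closure_nonneg hpos _ hsub
  have hb := closure_nonpos hneg _ hsub
  simp only [Pi.sub_apply, eVec_apply, if_pos rfl] at ha hb
  have hia : i = a := by
    by_contra hne
    have h1 : ¬ ((a:ℕ) = (i:ℕ)) := fun hc => hne (Fin.ext hc.symm)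
    norm_num [h1, hab] at ha
    split_ifs at ha <;> linarith
  have hjb : j = b := by
    by_contra hne
    have h1 : ¬ ((b:ℕ) = (j:ℕ)) := fun hc => hne (Fin.ext hc.symm)
    have h2 : ¬ ((b:ℕ) = (a:ℕ)) := fun hc => hab hc.symm
    norm_num [h1, h2] at hb
    split_ifs at hb <;> linarith
  rw [hia, hjb]

@[simp] lemma c50 : ((0:Fin 5):ℕ) = 0 := rfl
@[simp] lemma c51 : ((1:Fin 5):ℕ) = 1 := rfl
@[simp] lemma c52 : ((2:Fin 5):ℕ) = 2 := rfl
@[simp] lemma c53 : ((3:Fin 5):ℕ) = 3 := rfl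
@[simp] lemma c54 : ((4:Fin 5):ℕ) = 4 := rfl
@[simp] lemma c60 : ((0:Fin 6):ℕ) = 0 := rfl
@[simp] lemma c61 : ((1:Fin 6):ℕ) = 1 := rfl
@[simp] lemma c62 : ((2:Fin 6):ℕ) = 2 := rfl
@[simp] lemma c63 : ((3:Fin 6):ℕ) = 3 := rfl
@[simp] lemma c64 : ((4:Fin 6):ℕ) = 4 := rfl
@[simp] lemma c65 : ((5:Fin 6):ℕ) = 5 := rfl

lemma mem_SP (i : Fin 5) : betaA 5 i ∈ SP := ⟨i, rfl⟩

lemma mem_TP {i : Fin 5} (hi : i ≠ 2) : betaA 5 i ∈ TP :=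
  ⟨mem_SP i, fun hc => beta_ne i 2 hi hc⟩

lemma e05_eq : eVec (0:Fin 6) - eVec 5 =
    betaA 5 0 + betaA 5 1 + betaA 5 2 + betaA 5 3 + betaA 5 4 := by
  funext c
  simp only [Pi.sub_apply, Pi.add_apply, eVec_apply, beta_apply]
  fin_cases c <;> norm_num

lemma e14_eq : eVec (1:Fin 6) - eVec 4 = betaA 5 1 + betaA 5 2 + betaA 5 3 := by
  funext c
  simp only [Pi.sub_apply, Pi.add_apply, eVec_apply, beta_apply]
  fin_cases c <;> norm_num

lemma e23_eq : eVec (2:Fin 6) - eVec 3 = betaA 5 2 := by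
  funext c
  simp only [Pi.sub_apply, eVec_apply, beta_apply]
  fin_cases c <;> norm_num

lemma e02_eq : eVec (0:Fin 6) - eVec 2 = betaA 5 0 + betaA 5 1 := by
  funext c
  simp only [Pi.sub_apply, Pi.add_apply, eVec_apply, beta_apply]
  fin_cases c <;> norm_num

lemma e35_eq : eVec (3:Fin 6) - eVec 5 = betaA 5 3 + betaA 5 4 := by
  funext c
  simp only [Pi.sub_apply, Pi.add_apply, eVec_apply, beta_apply]
  fin_cases c <;> norm_num

lemma hrS {ε : Fin 6 → ℚ} (hε : (Asetup 5).IsHighestRoot SP ε) :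
    ε = eVec 0 - eVec 5 := by
  refine hr_unique (by norm_num) ?_ ?_ ?_ hε
  · rw [e05_eq]
    exact AddSubmonoid.add_mem _ (AddSubmonoid.add_mem _ (AddSubmonoid.add_mem _
      (AddSubmonoid.add_mem _ (AddSubmonoid.subset_closure (mem_SP 0))
        (AddSubmonoid.subset_closure (mem_SP 1))) (AddSubmonoid.subset_closure (mem_SP 2)))
      (AddSubmonoid.subset_closure (mem_SP 3))) (AddSubmonoid.subset_closure (mem_SP 4))
  · rintro v ⟨i, rfl⟩; rw [beta_apply]; fin_cases i <;> norm_num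
  · rintro v ⟨i, rfl⟩; rw [beta_apply]; fin_cases i <;> norm_num

lemma mem_MP_iff {v : Fin 6 → ℚ} :
    v ∈ MP ↔ v = betaA 5 1 ∨ v = betaA 5 2 ∨ v = betaA 5 3 := by
  simp [MP, Set.mem_insert_iff, Set.mem_singleton_iff]

lemma hrM {ε : Fin 6 → ℚ} (hε : (Asetup 5).IsHighestRoot MP ε) :
    ε = eVec 1 - eVec 4 := by
  refine hr_unique (a := 1) (b := 4) (by norm_num) ?_ ?_ ?_ hε
  · rw [e14_eq]
    refine AddSubmonoid.add_mem _ (AddSubmonoid.add_mem _ ?_ ?_) ?_ <;>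
      exact AddSubmonoid.subset_closure (by rw [mem_MP_iff]; tauto)
  · intro v hv; rcases mem_MP_iff.1 hv with rfl | rfl | rfl <;> rw [beta_apply] <;> norm_num
  · intro v hv; rcases mem_MP_iff.1 hv with rfl | rfl | rfl <;> rw [beta_apply] <;> norm_num

lemma hrB {ε : Fin 6 → ℚ} (hε : (Asetup 5).IsHighestRoot BP ε) :
    ε = eVec 2 - eVec 3 := by
  refine hr_unique (a := 2) (b := 3) (by norm_num) ?_ ?_ ?_ hε
  · rw [e23_eq]; exact AddSubmonoid.subset_closure rfl
  · intro v hv; rw [Set.mem_singleton_iff.1 hv, beta_apply]; norm_num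
  · intro v hv; rw [Set.mem_singleton_iff.1 hv, beta_apply]; norm_num

lemma mem_P01_iff {v : Fin 6 → ℚ} :
    v ∈ P01 ↔ v = betaA 5 0 ∨ v = betaA 5 1 := by
  simp [P01, Set.mem_insert_iff, Set.mem_singleton_iff]

lemma mem_P34_iff {v : Fin 6 → ℚ} :
    v ∈ P34 ↔ v = betaA 5 3 ∨ v = betaA 5 4 := by
  simp [P34, Set.mem_insert_iff, Set.mem_singleton_iff]

lemma hrP01 {ε : Fin 6 → ℚ} (hε : (Asetup 5).IsHighestRoot P01 ε) :
    ε = eVec 0 - eVec 2 := by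
  refine hr_unique (a := 0) (b := 2) (by norm_num) ?_ ?_ ?_ hε
  · rw [e02_eq]
    refine AddSubmonoid.add_mem _ ?_ ?_ <;>
      exact AddSubmonoid.subset_closure (by rw [mem_P01_iff]; tauto)
  · intro v hv; rcases mem_P01_iff.1 hv with rfl | rfl <;> rw [beta_apply] <;> norm_num
  · intro v hv; rcases mem_P01_iff.1 hv with rfl | rfl <;> rw [beta_apply] <;> norm_num

lemma hrP34 {ε : Fin 6 → ℚ} (hε : (Asetup 5).IsHighestRoot P34 ε) :
    ε = eVec 3 - eVec 5 := by
  refine hr_unique (a := 3) (b := 5) (by norm_num) ?_ ?_ ?_ hε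
  · rw [e35_eq]
    refine AddSubmonoid.add_mem _ ?_ ?_ <;>
      exact AddSubmonoid.subset_closure (by rw [mem_P34_iff]; tauto)
  · intro v hv; rcases mem_P34_iff.1 hv with rfl | rfl <;> rw [beta_apply] <;> norm_num
  · intro v hv; rcases mem_P34_iff.1 hv with rfl | rfl <;> rw [beta_apply] <;> norm_num

/-! Adjacency and connectivity facts. -/

lemma pair_eq_dot (x y : Fin 6 → ℚ) : (Asetup 5).pair x y = dotQ x y := rfl

lemma adj01 : (Asetup 5).adj (betaA 5 0) (betaA 5 1) :=
  ⟨beta_ne 0 1 (by decide), by rw [pair_eq_dot]; norm_num [dot_beta, beta_apply]⟩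
lemma adj12 : (Asetup 5).adj (betaA 5 1) (betaA 5 2) :=
  ⟨beta_ne 1 2 (by decide), by rw [pair_eq_dot]; norm_num [dot_beta, beta_apply]⟩
lemma adj23 : (Asetup 5).adj (betaA 5 2) (betaA 5 3) :=
  ⟨beta_ne 2 3 (by decide), by rw [pair_eq_dot]; norm_num [dot_beta, beta_apply]⟩
lemma adj34 : (Asetup 5).adj (betaA 5 3) (betaA 5 4) :=
  ⟨beta_ne 3 4 (by decide), by rw [pair_eq_dot]; norm_num [dot_beta, beta_apply]⟩

lemma symm_rel (U : Set (Fin 6 → ℚ)) :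
    Symmetric (fun x y => x ∈ U ∧ y ∈ U ∧ (Asetup 5).adj x y) := by
  rintro x y ⟨hx, hy, hne, hp⟩
  refine ⟨hy, hx, Ne.symm hne, fun h0 => hp ?_⟩
  rw [pair_eq_dot] at h0 ⊢
  rw [dot_comm]; exact h0

lemma connS : (Asetup 5).ConnectedIn SP := by
  set r := fun x y => x ∈ SP ∧ y ∈ SP ∧ (Asetup 5).adj x y with hr
  have h01 : Relation.ReflTransGen r (betaA 5 0) (betaA 5 1) :=
    Relation.ReflTransGen.single ⟨mem_SP 0, mem_SP 1, adj01⟩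
  have h02 := h01.tail ⟨mem_SP 1, mem_SP 2, adj12⟩
  have h03 := h02.tail ⟨mem_SP 2, mem_SP 3, adj23⟩
  have h04 := h03.tail ⟨mem_SP 3, mem_SP 4, adj34⟩
  have hc : ∀ i : Fin 5, Relation.ReflTransGen r (betaA 5 0) (betaA 5 i) := by
    intro i; fin_cases i
    exacts [Relation.ReflTransGen.refl, h01, h02, h03, h04]
  rintro α ⟨i, rfl⟩ β ⟨j, rfl⟩
  exact ((@Relation.ReflTransGen.stdSymm _ _ ⟨symm_rel SP⟩).symm _ _ (hc i)).trans (hc j)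

lemma connM : (Asetup 5).ConnectedIn MP := by
  set r := fun x y => x ∈ MP ∧ y ∈ MP ∧ (Asetup 5).adj x y with hr
  have m1 : betaA 5 1 ∈ MP := mem_MP_iff.2 (Or.inl rfl)
  have m2 : betaA 5 2 ∈ MP := mem_MP_iff.2 (Or.inr (Or.inl rfl))
  have m3 : betaA 5 3 ∈ MP := mem_MP_iff.2 (Or.inr (Or.inr rfl))
  have h12 : Relation.ReflTransGen r (betaA 5 1) (betaA 5 2) :=
    Relation.ReflTransGen.single ⟨m1, m2, adj12⟩
  have h13 := h12.tail ⟨m2, m3, adj23⟩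
  have hc : ∀ α ∈ MP, Relation.ReflTransGen r (betaA 5 1) α := by
    intro α hα
    rcases mem_MP_iff.1 hα with rfl | rfl | rfl
    exacts [Relation.ReflTransGen.refl, h12, h13]
  intro α hα β hβ
  exact ((@Relation.ReflTransGen.stdSymm _ _ ⟨symm_rel MP⟩).symm _ _ (hc α hα)).trans (hc β hβ)

lemma connB : (Asetup 5).ConnectedIn BP := by
  intro α hα β hβ
  simp only [BP, Set.mem_singleton_iff] at hα hβ
  rw [hα, hβ]

lemma connP01 : (Asetup 5).ConnectedIn P01 := by
  set r := fun x y => x ∈ P01 ∧ y ∈ P01 ∧ (Asetup 5).adj x y with hr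
  have m0 : betaA 5 0 ∈ P01 := mem_P01_iff.2 (Or.inl rfl)
  have m1 : betaA 5 1 ∈ P01 := mem_P01_iff.2 (Or.inr rfl)
  have hc : ∀ α ∈ P01, Relation.ReflTransGen r (betaA 5 0) α := by
    intro α hα
    rcases mem_P01_iff.1 hα with rfl | rfl
    exacts [Relation.ReflTransGen.refl, Relation.ReflTransGen.single ⟨m0, m1, adj01⟩]
  intro α hα β hβ
  exact ((@Relation.ReflTransGen.stdSymm _ _ ⟨symm_rel P01⟩).symm _ _ (hc α hα)).trans (hc β hβ)

lemma connP34 : (Asetup 5).ConnectedIn P34 := by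
  set r := fun x y => x ∈ P34 ∧ y ∈ P34 ∧ (Asetup 5).adj x y with hr
  have m3 : betaA 5 3 ∈ P34 := mem_P34_iff.2 (Or.inl rfl)
  have m4 : betaA 5 4 ∈ P34 := mem_P34_iff.2 (Or.inr rfl)
  have hc : ∀ α ∈ P34, Relation.ReflTransGen r (betaA 5 3) α := by
    intro α hα
    rcases mem_P34_iff.1 hα with rfl | rfl
    exacts [Relation.ReflTransGen.refl, Relation.ReflTransGen.single ⟨m3, m4, adj34⟩]
  intro α hα β hβ
  exact ((@Relation.ReflTransGen.stdSymm _ _ ⟨symm_rel P34⟩).symm _ _ (hc α hα)).trans (hc β hβ)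

lemma comp_of_conn {U C : Set (Fin 6 → ℚ)} (hU : (Asetup 5).ConnectedIn U)
    (hC : (Asetup 5).IsConnComp U C) : C = U :=
  Set.Subset.antisymm hC.1 (hC.2.2.2 U hC.1 subset_rfl hU)

/-! The connected components of `TP`. -/

lemma mem_TP_iff {v : Fin 6 → ℚ} :
    v ∈ TP ↔ ∃ i : Fin 5, i ≠ 2 ∧ v = betaA 5 i := by
  constructor
  · rintro ⟨⟨i, rfl⟩, hne⟩
    exact ⟨i, fun hc => hne (by rw [hc]; rfl), rfl⟩
  · rintro ⟨i, hi, rfl⟩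
    exact mem_TP hi

lemma dot_zero_far :
    dotQ (betaA 5 0) (betaA 5 3) = 0 ∧ dotQ (betaA 5 0) (betaA 5 4) = 0 ∧
    dotQ (betaA 5 1) (betaA 5 3) = 0 ∧ dotQ (betaA 5 1) (betaA 5 4) = 0 ∧
    dotQ (betaA 5 3) (betaA 5 0) = 0 ∧ dotQ (betaA 5 3) (betaA 5 1) = 0 ∧
    dotQ (betaA 5 4) (betaA 5 0) = 0 ∧ dotQ (betaA 5 4) (betaA 5 1) = 0 := by
  norm_num [dot_beta, beta_apply]

lemma reach01 {x y : Fin 6 → ℚ} (hx : x = betaA 5 0 ∨ x = betaA 5 1)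
    (hp : Relation.ReflTransGen (fun u v => u ∈ TP ∧ v ∈ TP ∧ (Asetup 5).adj u v) x y) :
    y = betaA 5 0 ∨ y = betaA 5 1 := by
  induction hp with
  | refl => exact hx
  | tail h1 h2 ih =>
    obtain ⟨-, hvT, -, hpair⟩ := h2
    obtain ⟨i, hi2, rfl⟩ := mem_TP_iff.1 hvT
    rw [pair_eq_dot] at hpair
    obtain ⟨d03, d04, d13, d14, -⟩ := dot_zero_far
    fin_cases i
    · exact Or.inl rfl
    · exact Or.inr rfl
    · exact absurd rfl hi2
    · rcases ih with rfl | rfl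
      · exact absurd d03 hpair
      · exact absurd d13 hpair
    · rcases ih with rfl | rfl
      · exact absurd d04 hpair
      · exact absurd d14 hpair

lemma reach34 {x y : Fin 6 → ℚ} (hx : x = betaA 5 3 ∨ x = betaA 5 4)
    (hp : Relation.ReflTransGen (fun u v => u ∈ TP ∧ v ∈ TP ∧ (Asetup 5).adj u v) x y) :
    y = betaA 5 3 ∨ y = betaA 5 4 := by
  induction hp with
  | refl => exact hx
  | tail h1 h2 ih =>
    obtain ⟨-, hvT, -, hpair⟩ := h2
    obtain ⟨i, hi2, rfl⟩ := mem_TP_iff.1 hvT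
    rw [pair_eq_dot] at hpair
    obtain ⟨-, -, -, -, d30, d31, d40, d41⟩ := dot_zero_far
    fin_cases i
    · rcases ih with rfl | rfl
      · exact absurd d30 hpair
      · exact absurd d40 hpair
    · rcases ih with rfl | rfl
      · exact absurd d31 hpair
      · exact absurd d41 hpair
    · exact absurd rfl hi2
    · exact Or.inl rfl
    · exact Or.inr rfl

lemma notConnT : ¬ (Asetup 5).ConnectedIn TP := by
  intro hc
  have hpath := hc (betaA 5 0) (mem_TP (by decide)) (betaA 5 3) (mem_TP (by decide))
  rcases reach01 (Or.inl rfl) hpath with hEq | hEq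
  · exact beta_ne 3 0 (by decide) hEq
  · exact beta_ne 3 1 (by decide) hEq

lemma P01_subset_TP : P01 ⊆ TP := by
  intro v hv
  rcases mem_P01_iff.1 hv with rfl | rfl
  · exact mem_TP (by decide)
  · exact mem_TP (by decide)

lemma P34_subset_TP : P34 ⊆ TP := by
  intro v hv
  rcases mem_P34_iff.1 hv with rfl | rfl
  · exact mem_TP (by decide)
  · exact mem_TP (by decide)

lemma compT {C : Set (Fin 6 → ℚ)} (hC : (Asetup 5).IsConnComp TP C) :
    C = P01 ∨ C = P34 := by
  obtain ⟨hsub, ⟨x0, hx0⟩, hconn, hmax⟩ := hC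
  have hmono : ∀ y ∈ C,
      Relation.ReflTransGen (fun u v => u ∈ TP ∧ v ∈ TP ∧ (Asetup 5).adj u v) x0 y := by
    intro y hy
    exact Relation.ReflTransGen.mono
      (fun a b hab => ⟨hsub hab.1, hsub hab.2.1, hab.2.2⟩) _ _ (hconn x0 hx0 y hy)
  obtain ⟨i, hi2, rfl⟩ := mem_TP_iff.1 (hsub hx0)
  have main01 : betaA 5 i = betaA 5 0 ∨ betaA 5 i = betaA 5 1 → C = P01 := by
    intro h01
    have hCsub : C ⊆ P01 := by
      intro y hy
      rcases reach01 h01 (hmono y hy) with rfl | rfl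
      · exact mem_P01_iff.2 (Or.inl rfl)
      · exact mem_P01_iff.2 (Or.inr rfl)
    exact Set.Subset.antisymm hCsub (hmax P01 hCsub P01_subset_TP connP01)
  have main34 : betaA 5 i = betaA 5 3 ∨ betaA 5 i = betaA 5 4 → C = P34 := by
    intro h34
    have hCsub : C ⊆ P34 := by
      intro y hy
      rcases reach34 h34 (hmono y hy) with rfl | rfl
      · exact mem_P34_iff.2 (Or.inl rfl)
      · exact mem_P34_iff.2 (Or.inr rfl)
    exact Set.Subset.antisymm hCsub (hmax P34 hCsub P34_subset_TP connP34)
  fin_cases i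
  · exact Or.inl (main01 (Or.inl rfl))
  · exact Or.inl (main01 (Or.inr rfl))
  · exact absurd rfl hi2
  · exact Or.inr (main34 (Or.inl rfl))
  · exact Or.inr (main34 (Or.inr rfl))

/-! The cascade of the empty set is empty. -/

lemma not_cascade_empty (K : Set (Fin 6 → ℚ)) : ¬ (Asetup 5).InCascade ∅ K := by
  intro hc
  cases hc with
  | self _ hne _ => exact Set.not_nonempty_empty hne
  | step _ _ ε _ hε _ =>
    obtain ⟨hR, hcl, -⟩ := hε
    rw [AddSubmonoid.closure_empty, AddSubmonoid.mem_bot] at hcl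
    obtain ⟨i, j, hij, heq⟩ := hR
    rw [hcl] at heq
    have hco := congrFun heq.symm i
    rw [Pi.sub_apply, eVec_apply, eVec_apply, if_pos rfl,
      if_neg (fun hc : (i:ℕ) = (j:ℕ) => hij (Fin.ext hc))] at hco
    norm_num at hco
  | comp _ C _ hC _ =>
    obtain ⟨hsub, ⟨x, hx⟩, -, -⟩ := hC
    exact hsub hx

/-! The zero-sets appearing in the cascade steps. -/

lemma setS : {α ∈ SP | (Asetup 5).pair (eVec 0 - eVec 5) α = 0} = MP := by
  ext α
  constructor
  · rintro ⟨⟨i, rfl⟩, hp⟩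
    rw [pair_eq_dot, dot_e_sub] at hp
    rw [mem_MP_iff]
    fin_cases i
    · norm_num [beta_apply] at hp
    · exact Or.inl (congrArg (betaA 5) (Fin.ext (by norm_num)))
    · exact Or.inr (Or.inl (congrArg (betaA 5) (Fin.ext (by norm_num))))
    · exact Or.inr (Or.inr (congrArg (betaA 5) (Fin.ext (by norm_num))))
    · norm_num [beta_apply] at hp
  · intro hα
    rcases mem_MP_iff.1 hα with rfl | rfl | rfl <;>
      exact ⟨mem_SP _, by rw [pair_eq_dot, dot_e_sub]; norm_num [beta_apply]⟩

lemma setM : {α ∈ MP | (Asetup 5).pair (eVec 1 - eVec 4) α = 0} = BP := by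
  ext α
  constructor
  · rintro ⟨hα, hp⟩
    rw [pair_eq_dot, dot_e_sub] at hp
    rcases mem_MP_iff.1 hα with rfl | rfl | rfl <;>
      first | (norm_num [beta_apply, BP, Set.mem_singleton_iff] at hp; done) | norm_num [beta_apply, BP, Set.mem_singleton_iff] at hp ⊢
  · intro hα
    rw [BP, Set.mem_singleton_iff] at hα
    subst hα
    exact ⟨mem_MP_iff.2 (Or.inr (Or.inl rfl)),
      by rw [pair_eq_dot, dot_e_sub]; norm_num [beta_apply]⟩

lemma setB : {α ∈ BP | (Asetup 5).pair (eVec 2 - eVec 3) α = 0} = ∅ := by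
  rw [Set.eq_empty_iff_forall_notMem]
  rintro α ⟨hα, hp⟩
  rw [BP, Set.mem_singleton_iff] at hα
  subst hα
  rw [pair_eq_dot, dot_e_sub] at hp
  norm_num [beta_apply] at hp

lemma setP01 : {α ∈ P01 | (Asetup 5).pair (eVec 0 - eVec 2) α = 0} = ∅ := by
  rw [Set.eq_empty_iff_forall_notMem]
  rintro α ⟨hα, hp⟩
  rw [pair_eq_dot, dot_e_sub] at hp
  rcases mem_P01_iff.1 hα with rfl | rfl <;> norm_num [beta_apply] at hp

lemma setP34 : {α ∈ P34 | (Asetup 5).pair (eVec 3 - eVec 5) α = 0} = ∅ := by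
  rw [Set.eq_empty_iff_forall_notMem]
  rintro α ⟨hα, hp⟩
  rw [pair_eq_dot, dot_e_sub] at hp
  rcases mem_P34_iff.1 hα with rfl | rfl <;> norm_num [beta_apply] at hp

/-! The main induction. -/

def Allowed (X : Set (Fin 6 → ℚ)) : Prop :=
  X = SP ∨ X = MP ∨ X = BP ∨ X = TP ∨ X = P01 ∨ X = P34

lemma hvec_dot : ∀ a b : Fin 6,
    dotQ (eVec a - eVec b) (betaA 5 0 - betaA 5 1 + betaA 5 3 - betaA 5 4) =
      (betaA 5 0 - betaA 5 1 + betaA 5 3 - betaA 5 4) a -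
      (betaA 5 0 - betaA 5 1 + betaA 5 3 - betaA 5 4) b :=
  fun a b => dot_e_sub a b _

lemma main_induction : ∀ X K : Set (Fin 6 → ℚ), (Asetup 5).InCascade X K → Allowed X →
    ∀ ε, (Asetup 5).IsHighestRoot K ε →
      dotQ ε (betaA 5 0 - betaA 5 1 + betaA 5 3 - betaA 5 4) = 0 := by
  intro X K hK
  induction hK with
  | self U hne hconn =>
    rintro (rfl | rfl | rfl | rfl | rfl | rfl) ε hε
    · rw [hrS hε, hvec_dot]; norm_num [Pi.sub_apply, Pi.add_apply, beta_apply]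
    · rw [hrM hε, hvec_dot]; norm_num [Pi.sub_apply, Pi.add_apply, beta_apply]
    · rw [hrB hε, hvec_dot]; norm_num [Pi.sub_apply, Pi.add_apply, beta_apply]
    · exact absurd hconn notConnT
    · rw [hrP01 hε, hvec_dot]; norm_num [Pi.sub_apply, Pi.add_apply, beta_apply]
    · rw [hrP34 hε, hvec_dot]; norm_num [Pi.sub_apply, Pi.add_apply, beta_apply]
  | step U K ε0 hconn hε0 hrec ih =>
    rintro (rfl | rfl | rfl | rfl | rfl | rfl) ε hε
    · rw [hrS hε0] at hrec ih
      rw [setS] at hrec ih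
      exact ih (Or.inr (Or.inl rfl)) ε hε
    · rw [hrM hε0] at hrec ih
      rw [setM] at hrec ih
      exact ih (Or.inr (Or.inr (Or.inl rfl))) ε hε
    · rw [hrB hε0] at hrec
      rw [setB] at hrec
      exact absurd hrec (not_cascade_empty K)
    · exact absurd hconn notConnT
    · rw [hrP01 hε0] at hrec
      rw [setP01] at hrec
      exact absurd hrec (not_cascade_empty K)
    · rw [hrP34 hε0] at hrec
      rw [setP34] at hrec
      exact absurd hrec (not_cascade_empty K)
  | comp U C K hC hrec ih =>
    rintro (rfl | rfl | rfl | rfl | rfl | rfl) ε hε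
    · exact ih ((comp_of_conn connS hC) ▸ Or.inl rfl) ε hε
    · exact ih ((comp_of_conn connM hC) ▸ Or.inr (Or.inl rfl)) ε hε
    · exact ih ((comp_of_conn connB hC) ▸ Or.inr (Or.inr (Or.inl rfl))) ε hε
    · rcases compT hC with rfl | rfl
      · exact ih (Or.inr (Or.inr (Or.inr (Or.inr (Or.inl rfl))))) ε hε
      · exact ih (Or.inr (Or.inr (Or.inr (Or.inr (Or.inr rfl))))) ε hε
    · exact ih ((comp_of_conn connP01 hC) ▸ Or.inr (Or.inr (Or.inr (Or.inr (Or.inl rfl))))) ε hε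
    · exact ih ((comp_of_conn connP34 hC) ▸ Or.inr (Or.inr (Or.inr (Or.inr (Or.inr rfl))))) ε hε

end Aux

end CascadePaper

namespace CascadePaper

/-- In type `A_5` with simple roots `α_1, …, α_5`
(0-indexed `betaA 5 0, …, betaA 5 4`), taking `S = Π` and
`T = Π ∖ {α_3}`, the element `h = h_{α_1} - h_{α_2} + h_{α_4} - h_{α_5}`
is nonzero, lies in the span of `{h_α : α ∈ S ∩ T}`, and satisfies
`ε_E(h) = 0` for every `E ∈ 𝒦(S) ∪ 𝒦(T)`. -/
theorem counterexample_A5 :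
    let D := Asetup 5
    let S : Set (Fin 6 → ℚ) := Set.range (betaA 5)
    let T : Set (Fin 6 → ℚ) := S \ {betaA 5 2}
    let h : Fin 6 → ℚ := betaA 5 0 - betaA 5 1 + betaA 5 3 - betaA 5 4
    h ≠ 0 ∧ h ∈ Submodule.span ℚ (S ∩ T) ∧
      ∀ (K : Set (Fin 6 → ℚ)) (ε : Fin 6 → ℚ),
        (D.InCascade S K ∨ D.InCascade T K) → D.IsHighestRoot K ε →
          D.pair ε h = 0 := by
  show (betaA 5 0 - betaA 5 1 + betaA 5 3 - betaA 5 4) ≠ 0 ∧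
    (betaA 5 0 - betaA 5 1 + betaA 5 3 - betaA 5 4) ∈
      Submodule.span ℚ (SP ∩ TP) ∧
    ∀ (K : Set (Fin 6 → ℚ)) (ε : Fin 6 → ℚ),
      ((Asetup 5).InCascade SP K ∨ (Asetup 5).InCascade TP K) →
        (Asetup 5).IsHighestRoot K ε →
          (Asetup 5).pair ε (betaA 5 0 - betaA 5 1 + betaA 5 3 - betaA 5 4) = 0
  refine ⟨?_, ?_, ?_⟩
  · intro h0
    have hco := congrFun h0 0
    norm_num [Pi.sub_apply, Pi.add_apply, Pi.zero_apply, beta_apply] at hco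
  · have m0 : betaA 5 0 ∈ SP ∩ TP := ⟨mem_SP 0, mem_TP (by decide)⟩
    have m1 : betaA 5 1 ∈ SP ∩ TP := ⟨mem_SP 1, mem_TP (by decide)⟩
    have m3 : betaA 5 3 ∈ SP ∩ TP := ⟨mem_SP 3, mem_TP (by decide)⟩
    have m4 : betaA 5 4 ∈ SP ∩ TP := ⟨mem_SP 4, mem_TP (by decide)⟩
    exact sub_mem (add_mem (sub_mem (Submodule.subset_span m0) (Submodule.subset_span m1))
      (Submodule.subset_span m3)) (Submodule.subset_span m4)
  · rintro K ε (hK | hK) hε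
    · exact main_induction _ _ hK (Or.inl rfl) ε hε
    · exact main_induction _ _ hK (Or.inr (Or.inr (Or.inr (Or.inl rfl)))) ε hε

end CascadePaper
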